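/- Let F be an algebraically closed field, G a finite group acting faithfully on V = F^n, Z = Z(GL(V)) ∩ G, and suppose v ∈ V is a nonzero vector whose line is not fixed by any element of G ∖ Z. For each coset ḡ ∈ G/Z define F(ḡ) := ∏_{h̄ ∈ G/Z ∖ {ḡ}} h̄(v), an element of Sym^{N−1}(V) where N = |G/Z|. Then for every integer j ≥ 1, the N polynomials F(ḡ)^j, ḡ ∈ G/Z, are linearly independent over F. -/

import Mathlib

open MvPolynomial


noncomputable def lform {F : Type*} [CommSemiring F] {n : ℕ} (u : Fin n → F) :
    MvPolynomial (Fin n) F := ∑ i, C (u i) * X i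

lemma primeX {F : Type*} [Field F] {n : ℕ} (i : Fin n) :
    Prime (X i : MvPolynomial (Fin n) F) := by
  cases n with
  | zero => exact i.elim0
  | succ m =>
    rw [← MulEquiv.prime_iff ((renameEquiv F (Equiv.swap i 0)).trans
      (finSuccEquiv F m)).toRingEquiv.toMulEquiv
      (p := (X i : MvPolynomial (Fin (m+1)) F))]
    have he : ((renameEquiv F (Equiv.swap i 0)).trans (finSuccEquiv F m)).toRingEquiv.toMulEquiv
        (X i) = Polynomial.X := by
      show finSuccEquiv F m (rename (Equiv.swap i 0) (X i)) = Polynomial.X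
      rw [rename_X, Equiv.swap_apply_left, finSuccEquiv_X_zero]
    rw [he]
    exact Polynomial.prime_X

lemma prime_lform {F : Type*} [Field F] {n : ℕ} {u : Fin n → F} (hu : u ≠ 0) :
    Prime (lform u) := by
  obtain ⟨i0, hi0⟩ := Function.ne_iff.mp hu
  simp only [Pi.zero_apply] at hi0
  set g : Fin n → MvPolynomial (Fin n) F := fun i => if i = i0 then lform u else X i with hg
  set g' : Fin n → MvPolynomial (Fin n) F := fun i => if i = i0 then
      C (u i0)⁻¹ * (X i0 - ∑ k ∈ Finset.univ.erase i0, C (u k) * X k) else X i with hg'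
  have hsplit : lform u =
      C (u i0) * X i0 + ∑ k ∈ Finset.univ.erase i0, C (u k) * X k := by
    rw [lform, ← Finset.add_sum_erase _ _ (Finset.mem_univ i0)]
  have key1 : ∀ i, aeval g (g' i) = X i := by
    intro i
    by_cases h : i = i0
    · rw [h]
      simp only [hg', if_pos rfl]
      rw [map_mul, map_sub, aeval_C, map_sum]
      have : ∀ k ∈ Finset.univ.erase i0, aeval g (C (u k) * X k) = C (u k) * X k := by
        intro k hk
        rw [map_mul, aeval_C, aeval_X, hg]
        simp [Finset.mem_erase.mp hk |>.1]
      rw [Finset.sum_congr rfl this, aeval_X, hg]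
      simp only [if_pos rfl, hsplit, if_true]
      rw [add_sub_cancel_right, algebraMap_eq, ← mul_assoc, ← C_mul,
        inv_mul_cancel₀ hi0, C_1, one_mul]
    · simp [hg', hg, h]
  have key2 : ∀ i, aeval g' (g i) = X i := by
    intro i
    by_cases h : i = i0
    · rw [h]
      simp only [hg, if_pos rfl, hsplit]
      rw [map_add, map_mul, aeval_C, aeval_X, map_sum]
      have : ∀ k ∈ Finset.univ.erase i0, aeval g' (C (u k) * X k) = C (u k) * X k := by
        intro k hk
        rw [map_mul, aeval_C, aeval_X, hg']
        simp [Finset.mem_erase.mp hk |>.1]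
      rw [Finset.sum_congr rfl this, hg']
      simp only [if_pos rfl, if_true]
      rw [algebraMap_eq, ← mul_assoc, ← C_mul, mul_inv_cancel₀ hi0, C_1, one_mul]
      ring
    · simp [hg', hg, h]
  have hcomp1 : (aeval g).comp (aeval g') = AlgHom.id F (MvPolynomial (Fin n) F) := by
    apply algHom_ext; intro i
    simp only [AlgHom.comp_apply, aeval_X, AlgHom.id_apply]
    exact key1 i
  have hcomp2 : (aeval g').comp (aeval g) = AlgHom.id F (MvPolynomial (Fin n) F) := by
    apply algHom_ext; intro i
    simp only [AlgHom.comp_apply, aeval_X, AlgHom.id_apply]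
    exact key2 i
  set e : MvPolynomial (Fin n) F ≃ₐ[F] MvPolynomial (Fin n) F :=
    AlgEquiv.ofAlgHom (aeval g) (aeval g') hcomp1 hcomp2 with he
  have hex : e.toRingEquiv.toMulEquiv (X i0) = lform u := by
    show aeval g (X i0) = lform u
    rw [aeval_X, hg]; simp
  have := (MulEquiv.prime_iff e.toRingEquiv.toMulEquiv (p := (X i0 : MvPolynomial (Fin n) F))).symm
  rw [hex] at this
  exact this.mp (primeX i0)

lemma eval_lform {F : Type*} [Field F] {n : ℕ} (u x : Fin n → F) :
    eval x (lform u) = ∑ i, u i * x i := by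
  simp [lform]

lemma lform_dvd_prop {F : Type*} [Field F] {n : ℕ} {u w : Fin n → F} (hu : u ≠ 0)
    (h : lform u ∣ lform w) : ∃ c : F, w = c • u := by
  obtain ⟨q, hq⟩ := h
  have heval : ∀ x : Fin n → F, (∑ i, u i * x i) = 0 → (∑ i, w i * x i) = 0 := by
    intro x hx
    have := congrArg (eval x) hq
    rw [eval_lform, map_mul, eval_lform, hx, zero_mul] at this
    exact this
  obtain ⟨i0, hi0⟩ := Function.ne_iff.mp hu
  simp only [Pi.zero_apply] at hi0
  set x0 : Fin n → F := Pi.single i0 (u i0)⁻¹ with hx0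
  have hux0 : ∑ i, u i * x0 i = 1 := by
    rw [hx0]
    rw [Finset.sum_eq_single i0]
    · rw [Pi.single_eq_same, mul_inv_cancel₀ hi0]
    · intro b _ hb; rw [Pi.single_eq_of_ne hb, mul_zero]
    · intro hb; exact absurd (Finset.mem_univ i0) hb
  set c : F := ∑ i, w i * x0 i with hc
  refine ⟨c, funext fun i => ?_⟩
  have h1 : ∑ k, u k * ((Pi.single i 1 : Fin n → F) k - u i * x0 k) = 0 := by
    simp only [mul_sub]
    rw [Finset.sum_sub_distrib]
    have hs1 : ∑ k, u k * (Pi.single i 1 : Fin n → F) k = u i := by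
      rw [Finset.sum_eq_single i]
      · rw [Pi.single_eq_same, mul_one]
      · intro b _ hb; rw [Pi.single_eq_of_ne hb, mul_zero]
      · intro hb; exact absurd (Finset.mem_univ i) hb
    have hs2 : ∑ k, u k * (u i * x0 k) = u i := by
      rw [Finset.sum_congr rfl (fun k _ => by ring_nf : ∀ k ∈ Finset.univ,
        u k * (u i * x0 k) = u i * (u k * x0 k))]
      rw [← Finset.mul_sum, hux0, mul_one]
    rw [hs1, hs2, sub_self]
  have h2 := heval _ h1
  simp only [mul_sub] at h2
  rw [Finset.sum_sub_distrib] at h2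
  have hs1 : ∑ k, w k * (Pi.single i 1 : Fin n → F) k = w i := by
    rw [Finset.sum_eq_single i]
    · rw [Pi.single_eq_same, mul_one]
    · intro b _ hb; rw [Pi.single_eq_of_ne hb, mul_zero]
    · intro hb; exact absurd (Finset.mem_univ i) hb
  have hs2 : ∑ k, w k * (u i * x0 k) = u i * c := by
    rw [Finset.sum_congr rfl (fun k _ => by ring_nf : ∀ k ∈ Finset.univ,
      w k * (u i * x0 k) = u i * (w k * x0 k))]
    rw [← Finset.mul_sum, hc]
  rw [hs1, hs2, sub_eq_zero] at h2
  rw [h2, Pi.smul_apply, smul_eq_mul, mul_comm]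

/-- Identifying `Sym^m(F^n)` with homogeneous polynomials of degree `m` in `x_1, ..., x_n`,
where a vector `u` corresponds to the linear form `∑ i, u i * X i`: if `v` is a nonzero vector
whose line is fixed by no element of `G ∖ Z`, `Z = Z(GL(V)) ∩ G`, and
`P ḡ = ∏_{h̄ ∈ G/Z, h̄ ≠ ḡ} h̄(v)` (a product of linear forms, one for each coset other than
`ḡ`), then for every `j ≥ 1` the `|G/Z|` polynomials `P ḡ ^ j` are linearly independent. -/
theorem stmt1 {F : Type*} [Field F] [IsAlgClosed F] {n : ℕ}
    {G : Type*} [Group G] [Fintype G]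
    (ρ : Representation F G (Fin n → F)) (hfaith : Function.Injective ρ)
    (Z : Subgroup G)
    (hZ : ∀ g : G, g ∈ Z ↔ ∃ c : F, ρ g = c • (LinearMap.id : (Fin n → F) →ₗ[F] (Fin n → F)))
    [Fintype (G ⧸ Z)] [DecidableEq (G ⧸ Z)]
    (v : Fin n → F) (hv : v ≠ 0)
    (hline : ∀ g : G, (∃ c : F, ρ g v = c • v) → g ∈ Z)
    (j : ℕ) (hj : 1 ≤ j)
    (P : G ⧸ Z → MvPolynomial (Fin n) F)
    (hP : ∀ g : G ⧸ Z, P g = ∏ h ∈ Finset.univ.erase g, ∑ i, C (ρ h.out v i) * X i) :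
    LinearIndependent F (fun g : G ⧸ Z => P g ^ j) := by
  set w : (G ⧸ Z) → Fin n → F := fun k => ρ k.out v with hwdef
  have hw : ∀ k, w k ≠ 0 := by
    intro k hk
    apply hv
    have : ρ k.out⁻¹ (ρ k.out v) = v := by
      rw [← Module.End.mul_apply, ← map_mul, inv_mul_cancel, map_one, Module.End.one_apply]
    rw [hwdef] at hk
    simp only at hk
    rw [hk, map_zero] at this
    exact this.symm
  have hPl : ∀ g : G ⧸ Z, P g = ∏ h ∈ Finset.univ.erase g, lform (w h) := by
    intro g; rw [hP g]; rfl
  rw [Fintype.linearIndependent_iff]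
  intro f hf g0
  by_contra hne
  set L : MvPolynomial (Fin n) F := lform (w g0) with hL
  have hLp : Prime L := prime_lform (hw g0)
  have hdvd : ∀ h ∈ Finset.univ.erase g0, L ∣ f h • P h ^ j := by
    intro h hh
    have h1 : L ∣ P h := by
      rw [hPl h]
      apply Finset.dvd_prod_of_mem
      rw [Finset.mem_erase]
      exact ⟨Ne.symm (Finset.mem_erase.mp hh).1, Finset.mem_univ _⟩
    rw [smul_eq_C_mul]
    exact (h1.trans (dvd_pow_self _ (by omega))).mul_left _
  have hsum : f g0 • P g0 ^ j = -∑ h ∈ Finset.univ.erase g0, f h • P h ^ j := by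
    have h3 := Finset.add_sum_erase Finset.univ (fun h => f h • P h ^ j) (Finset.mem_univ g0)
    rw [hf] at h3
    exact eq_neg_of_add_eq_zero_left h3
  have hLd : L ∣ f g0 • P g0 ^ j := by
    rw [hsum]
    exact Dvd.dvd.neg_right (Finset.dvd_sum hdvd)
  have hLd2 : L ∣ P g0 ^ j := by
    have : P g0 ^ j = (f g0)⁻¹ • (f g0 • P g0 ^ j) := by
      rw [smul_smul, inv_mul_cancel₀ hne, one_smul]
    rw [this, smul_eq_C_mul]
    exact hLd.mul_left _
  have hLd3 : L ∣ P g0 := hLp.dvd_of_dvd_pow hLd2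
  rw [hPl g0] at hLd3
  obtain ⟨k, hk, hkd⟩ := hLp.exists_mem_finset_dvd hLd3
  obtain ⟨c, hc⟩ := lform_dvd_prop (hw g0) hkd
  have hcne : c ≠ 0 := by
    intro h0; rw [h0, zero_smul] at hc; exact hw k hc
  have hmem : g0.out⁻¹ * k.out ∈ Z := by
    apply hline
    refine ⟨c, ?_⟩
    rw [map_mul, Module.End.mul_apply]
    have : ρ k.out v = c • ρ g0.out v := hc
    rw [this, map_smul, ← Module.End.mul_apply, ← map_mul, inv_mul_cancel, map_one,
      Module.End.one_apply]
  have : (k : G ⧸ Z) = g0 := by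
    rw [← Quotient.out_eq k, ← Quotient.out_eq g0]
    exact (QuotientGroup.eq.mpr hmem).symm
  exact (Finset.mem_erase.mp hk).1 this
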